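/- arXiv:1701.02210 — 3 statements merged into one kernel-verified Lean document; each statement's English description precedes it below -/
import Mathlib

section
/- Let S be a 2×2 matrix function on the unit disk whose entries are Schur functions, such that det S ≢ 0 and the boundary values of S are unitary matrices a.e. on an arc γ of the unit circle. Then the entry s₂₂ admits a pseudocontinuation of bounded type across γ, given explicitly by s̃₂₂(ζ) = conj(s₁₁(1/conj(ζ))) / conj(det S(1/conj(ζ))) for ζ in the exterior disk. -/
open MeasureTheory Filter Complex Set Matrix

noncomputable section

/-- The open unit disk. -/
def unitDisk : Set ℂ := {z : ℂ | ‖z‖ < 1}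

/-- The exterior of the closed unit disk. -/
def extDisk : Set ℂ := {z : ℂ | 1 < ‖z‖}

/-- Point on the unit circle with angle `θ`. -/
def circlePt (θ : ℝ) : ℂ := Complex.exp (θ * Complex.I)

/-- One full period of angles, parametrizing the circle 𝕋. -/
def circleSet : Set ℝ := Set.Ioc 0 (2 * Real.pi)

/-- `RadLim f θ w` : the radial (nontangential) boundary value of `f` (analytic in the
disk) at the boundary point `circlePt θ` exists and equals `w`. -/
def RadLim (f : ℂ → ℂ) (θ : ℝ) (w : ℂ) : Prop :=
  Filter.Tendsto (fun r : ℝ => f ((r : ℂ) * circlePt θ))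
    (nhdsWithin 1 (Set.Iio 1)) (nhds w)

/-- `RadLimExt f θ w` : the radial boundary value of `f` (analytic in the exterior disk)
at the boundary point `circlePt θ`, taken from outside. -/
def RadLimExt (f : ℂ → ℂ) (θ : ℝ) (w : ℂ) : Prop :=
  Filter.Tendsto (fun r : ℝ => f ((r : ℂ) * circlePt θ))
    (nhdsWithin 1 (Set.Ioi 1)) (nhds w)

/-- A Schur function: analytic on the unit disk and bounded by 1 in modulus. -/
def SchurFn (f : ℂ → ℂ) : Prop :=
  DifferentiableOn ℂ f unitDisk ∧ ∀ z ∈ unitDisk, ‖f z‖ ≤ 1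

/-- The Nevanlinna class on a domain `Ω` : quotients of two bounded (contractive)
analytic functions, with not-identically-zero denominator. -/
def NevOn (Ω : Set ℂ) (f : ℂ → ℂ) : Prop :=
  ∃ f₁ f₂ : ℂ → ℂ, DifferentiableOn ℂ f₁ Ω ∧ DifferentiableOn ℂ f₂ Ω ∧
    (∀ z ∈ Ω, ‖f₁ z‖ ≤ 1) ∧ (∀ z ∈ Ω, ‖f₂ z‖ ≤ 1) ∧
    (∃ z ∈ Ω, f₂ z ≠ 0) ∧ (∀ z ∈ Ω, f₂ z ≠ 0 → f z = f₁ z / f₂ z)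

/-- An arc of the unit circle, described by its set of angles (one full period is
`Set.Ioo 0 (2π)` up to a null set, so the case γ = 𝕋 is not excluded). -/
def IsArc (γ : Set ℝ) : Prop :=
  ∃ a b : ℝ, 0 ≤ a ∧ a < b ∧ b ≤ 2 * Real.pi ∧ γ = Set.Ioo a b

/-- `f` admits a pseudocontinuation of bounded type across the arc with angle set `γ` :
there is a Nevanlinna function on the exterior disk whose boundary values agree with
those of `f` a.e. on `γ`. -/
def PCArc (f : ℂ → ℂ) (γ : Set ℝ) : Prop :=
  ∃ ft : ℂ → ℂ, NevOn extDisk ft ∧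
    ∀ᵐ θ ∂(volume.restrict γ), ∃ w : ℂ, RadLim f θ w ∧ RadLimExt ft θ w

/-- The boundary values of `f` exist and are unimodular a.e. on `γ`. -/
def UnimodularAEOn (f : ℂ → ℂ) (γ : Set ℝ) : Prop :=
  ∀ᵐ θ ∂(volume.restrict γ), ∃ w : ℂ, RadLim f θ w ∧ ‖w‖ = 1

/-- The boundary values of the 2×2 matrix function `S` exist and are unitary a.e. on `γ`. -/
def UnitaryAEOn (S : ℂ → Matrix (Fin 2) (Fin 2) ℂ) (γ : Set ℝ) : Prop :=
  ∀ᵐ θ ∂(volume.restrict γ), ∃ W : Matrix (Fin 2) (Fin 2) ℂ,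
    (∀ i j, RadLim (fun z => S z i j) θ (W i j)) ∧ Wᴴ * W = 1

/-- An outer function on the unit disk (normalized, with multiplicative constant 1):
`f z = exp (∫_𝕋 (t+z)/(t-z) φ(t) dm(t))` for some real integrable boundary data `φ`,
`m` being normalized Lebesgue measure on 𝕋. -/
def IsOuter (f : ℂ → ℂ) : Prop :=
  ∃ φ : ℝ → ℝ, IntegrableOn φ circleSet ∧
    ∀ z ∈ unitDisk, f z =
      Complex.exp (∫ θ in circleSet,
        ((circlePt θ + z) / (circlePt θ - z)) * (φ θ : ℂ) / (2 * Real.pi))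

/-- reflection of a differentiable function is differentiable -/
lemma reflDiffOn {f : ℂ → ℂ} {s : Set ℂ} (hf : DifferentiableOn ℂ f s) :
    DifferentiableOn ℂ (fun z => (starRingEnd ℂ) (f ((starRingEnd ℂ) z)))
      ((starRingEnd ℂ) ⁻¹' s) := by
  intro z hz
  have hz' : (starRingEnd ℂ) z ∈ s := hz
  have h1 := hasDerivWithinAt_iff_tendsto_slope.1 (hf _ hz').hasDerivWithinAt
  have hσ : Tendsto (starRingEnd ℂ) (nhdsWithin z ((starRingEnd ℂ) ⁻¹' s \ {z}))
      (nhdsWithin ((starRingEnd ℂ) z) (s \ {(starRingEnd ℂ) z})) := by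
    refine tendsto_nhdsWithin_iff.2 ⟨(Complex.continuous_conj.tendsto z).mono_left
      nhdsWithin_le_nhds, ?_⟩
    filter_upwards [self_mem_nhdsWithin] with w hw
    exact ⟨hw.1, fun h => hw.2 (by simpa using star_injective h)⟩
  have h2 : Tendsto (fun w => (starRingEnd ℂ)
        (slope f ((starRingEnd ℂ) z) ((starRingEnd ℂ) w)))
      (nhdsWithin z ((starRingEnd ℂ) ⁻¹' s \ {z}))
      (nhds ((starRingEnd ℂ) (derivWithin f s ((starRingEnd ℂ) z)))) :=
    (Complex.continuous_conj.tendsto _).comp (h1.comp hσ)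
  have hslope : ∀ w, slope (fun z => (starRingEnd ℂ) (f ((starRingEnd ℂ) z))) z w
      = (starRingEnd ℂ) (slope f ((starRingEnd ℂ) z) ((starRingEnd ℂ) w)) := by
    intro w
    simp [slope_def_field, map_div₀, map_sub]
  exact (hasDerivWithinAt_iff_tendsto_slope.2
    (h2.congr fun w => (hslope w).symm)).differentiableWithinAt

/-- a 2×2 matrix function `S` with Schur entries, `det S ≢ 0`, unitary
a.e. on the arc `γ`, has `s₂₂` pseudocontinuable across `γ`, the pseudocontinuation
being `ζ ↦ conj (s₁₁(1/conj ζ)) / conj (det S(1/conj ζ))`. -/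
theorem statement2 (S : ℂ → Matrix (Fin 2) (Fin 2) ℂ) (γ : Set ℝ) (hγ : IsArc γ)
    (hS : ∀ i j, SchurFn fun z => S z i j)
    (hdet : ∃ z ∈ unitDisk, (S z).det ≠ 0)
    (huni : UnitaryAEOn S γ) :
    NevOn extDisk (fun ζ => (starRingEnd ℂ) (S (1 / (starRingEnd ℂ) ζ) 0 0) /
      (starRingEnd ℂ) ((S (1 / (starRingEnd ℂ) ζ)).det)) ∧
    (∀ᵐ θ ∂(volume.restrict γ), ∃ w : ℂ, RadLim (fun z => S z 1 1) θ w ∧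
      RadLimExt (fun ζ => (starRingEnd ℂ) (S (1 / (starRingEnd ℂ) ζ) 0 0) /
        (starRingEnd ℂ) ((S (1 / (starRingEnd ℂ) ζ)).det)) θ w) := by
  have hpre : (starRingEnd ℂ) ⁻¹' unitDisk = unitDisk := by
    ext z; simp [unitDisk, RCLike.norm_conj]
  have hdetdiff : DifferentiableOn ℂ (fun z => (S z).det) unitDisk := by
    have he : (fun z => (S z).det) = fun z => S z 0 0 * S z 1 1 - S z 0 1 * S z 1 0 := by
      funext z; rw [Matrix.det_fin_two]
    rw [he]
    exact ((hS 0 0).1.mul (hS 1 1).1).sub ((hS 0 1).1.mul (hS 1 0).1)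
  -- a nonzero point of the disk where det ≠ 0
  obtain ⟨z₁, hz₁u, hz₁d, hz₁0⟩ : ∃ z, z ∈ unitDisk ∧ (S z).det ≠ 0 ∧ z ≠ 0 := by
    obtain ⟨z₀, hz₀u, hz₀d⟩ := hdet
    have hopen : IsOpen unitDisk := by
      have he : unitDisk = (fun z : ℂ => ‖z‖) ⁻¹' (Set.Iio 1) := rfl
      rw [he]; exact isOpen_Iio.preimage continuous_norm
    by_cases h0 : z₀ = 0
    · have hV : IsOpen (unitDisk ∩ (fun z => (S z).det) ⁻¹' {(0:ℂ)}ᶜ) :=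
        hdetdiff.continuousOn.isOpen_inter_preimage hopen isOpen_compl_singleton
      obtain ⟨ε, hε, hball⟩ := Metric.isOpen_iff.1 hV z₀ ⟨hz₀u, hz₀d⟩
      have hmem : z₀ + ((ε/2 : ℝ) : ℂ) ∈ Metric.ball z₀ ε := by
        simp only [Metric.mem_ball, dist_eq_norm, add_sub_cancel_left]
        rw [Complex.norm_real, Real.norm_eq_abs, abs_of_pos (by linarith)]
        linarith
      refine ⟨z₀ + ((ε/2 : ℝ) : ℂ), (hball hmem).1, (hball hmem).2, ?_⟩
      rw [h0, zero_add]
      exact_mod_cast (by positivity : (ε/2 : ℝ) ≠ 0)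
    · exact ⟨z₀, hz₀u, hz₀d, h0⟩
  have hmem : ∀ ζ ∈ extDisk, 1 / (starRingEnd ℂ) ζ ∈ unitDisk := by
    intro ζ hζ
    have h1 : (1:ℝ) < ‖ζ‖ := hζ
    show ‖1 / (starRingEnd ℂ) ζ‖ < 1
    rw [norm_div, norm_one, RCLike.norm_conj, div_lt_one (lt_trans one_pos h1)]
    exact h1
  -- reflection differentiability
  have refl : ∀ g : ℂ → ℂ, DifferentiableOn ℂ g unitDisk →
      DifferentiableOn ℂ (fun ζ => (starRingEnd ℂ) (g (1 / (starRingEnd ℂ) ζ))) extDisk := by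
    intro g hg
    have h1 : DifferentiableOn ℂ (fun z => (starRingEnd ℂ) (g ((starRingEnd ℂ) z)))
        unitDisk := hpre ▸ reflDiffOn hg
    have hinvd : DifferentiableOn ℂ (fun z : ℂ => z⁻¹) extDisk := by
      intro z hz
      have hz0 : z ≠ 0 := by
        intro h
        have h1 : (1:ℝ) < ‖z‖ := hz
        rw [h] at h1; simp at h1; linarith
      exact (differentiableAt_inv hz0).differentiableWithinAt
    have hmaps : Set.MapsTo (fun z : ℂ => z⁻¹) extDisk unitDisk := by
      intro ζ hζ
      have := hmem ζ hζ
      show ζ⁻¹ ∈ unitDisk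
      have h1 : (1:ℝ) < ‖ζ‖ := hζ
      show ‖ζ⁻¹‖ < 1
      rw [norm_inv]
      exact inv_lt_one_of_one_lt₀ h1
    refine (h1.comp hinvd hmaps).congr ?_
    intro ζ hζ
    simp only [Function.comp_apply, map_inv₀, one_div]
  have hdiff1 := refl _ (hS 0 0).1
  have hdiff2 := refl _ hdetdiff
  constructor
  · refine ⟨fun ζ => (starRingEnd ℂ) (S (1 / (starRingEnd ℂ) ζ) 0 0) / 2,
      fun ζ => (starRingEnd ℂ) ((S (1 / (starRingEnd ℂ) ζ)).det) / 2,
      hdiff1.div_const 2, hdiff2.div_const 2, ?_, ?_, ?_, ?_⟩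
    · intro ζ hζ
      have h := (hS 0 0).2 _ (hmem ζ hζ)
      rw [norm_div, RCLike.norm_conj]
      have h2 : ‖(2:ℂ)‖ = 2 := by norm_num
      rw [h2]
      linarith
    · intro ζ hζ
      set z := 1 / (starRingEnd ℂ) ζ with hz
      have hzu := hmem ζ hζ
      have h00 := (hS 0 0).2 z hzu
      have h01 := (hS 0 1).2 z hzu
      have h10 := (hS 1 0).2 z hzu
      have h11 := (hS 1 1).2 z hzu
      have hd : ‖(S z).det‖ ≤ 2 := by
        rw [Matrix.det_fin_two]
        refine (norm_sub_le _ _).trans ?_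
        rw [norm_mul, norm_mul]
        nlinarith [norm_nonneg (S z 0 0), norm_nonneg (S z 1 1),
          norm_nonneg (S z 0 1), norm_nonneg (S z 1 0)]
      rw [norm_div, RCLike.norm_conj]
      have h2 : ‖(2:ℂ)‖ = 2 := by norm_num
      rw [h2]
      linarith
    · refine ⟨((starRingEnd ℂ) z₁)⁻¹, ?_, ?_⟩
      · show (1:ℝ) < ‖((starRingEnd ℂ) z₁)⁻¹‖
        rw [norm_inv, RCLike.norm_conj]
        exact one_lt_inv₀ (norm_pos_iff.2 hz₁0) |>.2 hz₁u
      · have hkey : 1 / (starRingEnd ℂ) (((starRingEnd ℂ) z₁)⁻¹) = z₁ := by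
          rw [map_inv₀, Complex.conj_conj, one_div, inv_inv]
        show (starRingEnd ℂ) ((S (1 / (starRingEnd ℂ) (((starRingEnd ℂ) z₁)⁻¹))).det) / 2 ≠ 0
        rw [hkey]
        exact div_ne_zero (by simpa using hz₁d) two_ne_zero
    · intro ζ hζ hne
      have hb : (starRingEnd ℂ) ((S (1 / (starRingEnd ℂ) ζ)).det) ≠ 0 := by
        intro h; exact hne (by simp only [h, zero_div])
      show _ = (starRingEnd ℂ) (S (1 / (starRingEnd ℂ) ζ) 0 0) / 2 /
        ((starRingEnd ℂ) ((S (1 / (starRingEnd ℂ) ζ)).det) / 2)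
      rw [div_div_div_comm, div_self (two_ne_zero), div_one]
  · filter_upwards [huni] with θ hθ
    obtain ⟨W, hW, hWu⟩ := hθ
    have hent := Matrix.ext_iff.2 hWu
    have e01 := hent 0 1
    have e11 := hent 1 1
    simp only [Matrix.mul_apply, Fin.sum_univ_two, Matrix.conjTranspose_apply,
      Matrix.one_apply_eq, Matrix.one_apply_ne (by decide : (0 : Fin 2) ≠ 1),
      RCLike.star_def] at e01 e11
    have hdetW : (starRingEnd ℂ) W.det * W.det = 1 := by
      have h := congrArg Matrix.det hWu
      rwa [Matrix.det_mul, Matrix.det_conjTranspose, Matrix.det_one] at h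
    have hdW : (starRingEnd ℂ) W.det ≠ 0 := left_ne_zero_of_mul_eq_one hdetW
    refine ⟨W 1 1, hW 1 1, ?_⟩
    have hinv : Tendsto (fun r : ℝ => r⁻¹) (nhdsWithin 1 (Set.Ioi 1))
        (nhdsWithin 1 (Set.Iio 1)) := by
      refine tendsto_nhdsWithin_iff.2 ⟨?_, ?_⟩
      · have h : Tendsto (fun r : ℝ => r⁻¹) (nhds 1) (nhds 1) := by
          simpa using (continuousAt_inv₀ (one_ne_zero : (1:ℝ) ≠ 0)).tendsto
        exact h.mono_left nhdsWithin_le_nhds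
      · filter_upwards [self_mem_nhdsWithin] with r hr
        exact inv_lt_one_of_one_lt₀ (Set.mem_Ioi.1 hr)
    have hT : ∀ i j, Tendsto (fun r : ℝ => S (((r⁻¹ : ℝ) : ℂ) * circlePt θ) i j)
        (nhdsWithin 1 (Set.Ioi 1)) (nhds (W i j)) := fun i j => (hW i j).comp hinv
    have hTdet : Tendsto (fun r : ℝ => (S (((r⁻¹ : ℝ) : ℂ) * circlePt θ)).det)
        (nhdsWithin 1 (Set.Ioi 1)) (nhds W.det) := by
      have h := ((hT 0 0).mul (hT 1 1)).sub ((hT 0 1).mul (hT 1 0))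
      simpa [Matrix.det_fin_two] using h
    have hfull : Tendsto (fun r : ℝ =>
        (starRingEnd ℂ) (S (((r⁻¹:ℝ):ℂ) * circlePt θ) 0 0) /
        (starRingEnd ℂ) ((S (((r⁻¹:ℝ):ℂ) * circlePt θ)).det))
        (nhdsWithin 1 (Set.Ioi 1))
        (nhds ((starRingEnd ℂ) (W 0 0) / (starRingEnd ℂ) W.det)) :=
      ((Complex.continuous_conj.tendsto _).comp (hT 0 0)).div
        ((Complex.continuous_conj.tendsto _).comp hTdet) hdW
    have hval : (starRingEnd ℂ) (W 0 0) / (starRingEnd ℂ) W.det = W 1 1 := by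
      rw [div_eq_iff hdW, Matrix.det_fin_two, map_sub, _root_.map_mul, _root_.map_mul]
      linear_combination (starRingEnd ℂ) (W 0 1) * e01 - (starRingEnd ℂ) (W 0 0) * e11
    have heq : (fun r : ℝ =>
        (starRingEnd ℂ) (S (((r⁻¹:ℝ):ℂ) * circlePt θ) 0 0) /
        (starRingEnd ℂ) ((S (((r⁻¹:ℝ):ℂ) * circlePt θ)).det))
        =ᶠ[nhdsWithin 1 (Set.Ioi 1)]
        (fun r : ℝ => (starRingEnd ℂ) (S (1 / (starRingEnd ℂ) ((r:ℂ) * circlePt θ)) 0 0) /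
          (starRingEnd ℂ) ((S (1 / (starRingEnd ℂ) ((r:ℂ) * circlePt θ))).det)) := by
      filter_upwards [self_mem_nhdsWithin] with r hr
      have hr1 : (1:ℝ) < r := hr
      have hrc : ((r:ℝ):ℂ) ≠ 0 := Complex.ofReal_ne_zero.2 (by linarith)
      have key : 1 / (starRingEnd ℂ) ((r:ℂ) * circlePt θ) = ((r⁻¹:ℝ):ℂ) * circlePt θ := by
        have h1 : (starRingEnd ℂ) ((r:ℂ) * circlePt θ)
            = (r:ℂ) * Complex.exp (-((θ:ℂ) * Complex.I)) := by
          rw [_root_.map_mul, Complex.conj_ofReal, circlePt, ← Complex.exp_conj, _root_.map_mul,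
            Complex.conj_ofReal, Complex.conj_I, mul_neg]
        rw [h1, one_div, mul_inv, ← Complex.exp_neg, neg_neg, Complex.ofReal_inv]
        rfl
      rw [key]
    exact Tendsto.congr' heq (hval ▸ hfull)
end
end

section
/- Every entry of a 2×2 matrix function with Schur function entries whose boundary values are unitary a.e. on an arc γ of the unit circle (and with not-identically-zero determinant) admits a pseudocontinuation of bounded type across γ. -/
open MeasureTheory Filter Complex Set Matrix

noncomputable section

lemma isOpen_unitDisk : IsOpen unitDisk := isOpen_lt continuous_norm continuous_const

lemma conj_circlePt (θ : ℝ) : (starRingEnd ℂ) (circlePt θ) = (circlePt θ)⁻¹ := by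
  rw [circlePt, ← Complex.exp_conj, ← Complex.exp_neg]
  congr 1
  rw [_root_.map_mul, Complex.conj_ofReal, Complex.conj_I]
  ring

lemma key_inv (θ : ℝ) (r : ℝ) :
    ((starRingEnd ℂ) ((r : ℂ) * circlePt θ))⁻¹ = ((r⁻¹ : ℝ) : ℂ) * circlePt θ := by
  rw [_root_.map_mul, conj_circlePt, mul_inv, inv_inv, Complex.conj_ofReal, Complex.ofReal_inv]

lemma mem_unitDisk_of_ext {z : ℂ} (hz : z ∈ extDisk) :
    ((starRingEnd ℂ) z)⁻¹ ∈ unitDisk := by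
  have h1 : (1:ℝ) < ‖z‖ := hz
  have : ‖((starRingEnd ℂ) z)⁻¹‖ = ‖z‖⁻¹ := by
    rw [norm_inv, RCLike.norm_conj]
  simp only [unitDisk, Set.mem_setOf_eq, this]
  exact inv_lt_one_of_one_lt₀ h1

lemma tendsto_inv_aux : Filter.Tendsto (fun r : ℝ => r⁻¹)
    (nhdsWithin 1 (Set.Ioi 1)) (nhdsWithin 1 (Set.Iio 1)) := by
  apply tendsto_nhdsWithin_of_tendsto_nhds_of_eventually_within
  · have : Filter.Tendsto (fun r : ℝ => r⁻¹) (nhds 1) (nhds 1) := by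
      simpa using (continuousAt_inv₀ (one_ne_zero (α := ℝ))).tendsto
    exact this.mono_left nhdsWithin_le_nhds
  · filter_upwards [self_mem_nhdsWithin] with r (hr : 1 < r)
    exact inv_lt_one_of_one_lt₀ hr

lemma hasDerivAt_conj_comp {F : ℂ → ℂ} {d z : ℂ}
    (h : HasDerivAt F d ((starRingEnd ℂ) z)) :
    HasDerivAt (fun w => (starRingEnd ℂ) (F ((starRingEnd ℂ) w))) ((starRingEnd ℂ) d) z := by
  have hC : ∀ y : ℂ, HasFDerivAt (𝕜 := ℝ) (starRingEnd ℂ)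
      (Complex.conjCLE.toContinuousLinearMap) y := by
    intro y
    have := Complex.conjCLE.toContinuousLinearMap.hasFDerivAt (x := y)
    convert this using 1
    funext x
    simp
  have h2 : HasFDerivAt (𝕜 := ℝ) F
      ((ContinuousLinearMap.smulRight (1 : ℂ →L[ℂ] ℂ) d).restrictScalars ℝ)
      ((starRingEnd ℂ) z) := h.hasFDerivAt.restrictScalars ℝ
  have h3 := (hC (F ((starRingEnd ℂ) z))).comp z ((h2.comp z (hC z)))
  have h4 : HasFDerivAt (fun w => (starRingEnd ℂ) (F ((starRingEnd ℂ) w)))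
      (ContinuousLinearMap.smulRight (1 : ℂ →L[ℂ] ℂ) ((starRingEnd ℂ) d)) z := by
    apply hasFDerivAt_of_restrictScalars ℝ h3
    apply ContinuousLinearMap.ext
    intro x
    simp [Complex.conjCLE_apply, mul_comm]
  simpa using h4.hasDerivAt

/-- Flip a function on the unit disk to the exterior disk. -/
noncomputable def flipFn (F : ℂ → ℂ) : ℂ → ℂ :=
  fun z => (starRingEnd ℂ) (F ((starRingEnd ℂ) z)⁻¹)

lemma diffOn_flip {F : ℂ → ℂ} (hF : DifferentiableOn ℂ F unitDisk) :
    DifferentiableOn ℂ (flipFn F) extDisk := by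
  intro z hz
  apply DifferentiableAt.differentiableWithinAt
  have hz1 : (1:ℝ) < ‖z‖ := hz
  have hz0 : z ≠ 0 := norm_pos_iff.mp (lt_trans one_pos hz1)
  have hmem : ((starRingEnd ℂ) (z⁻¹)) ∈ unitDisk := by
    rw [map_inv₀]
    exact mem_unitDisk_of_ext hz
  have hd := (hF.differentiableAt (isOpen_unitDisk.mem_nhds hmem)).hasDerivAt
  have hG := hasDerivAt_conj_comp hd
  have hinv : HasDerivAt (fun w : ℂ => w⁻¹) (-(z ^ 2)⁻¹) z := hasDerivAt_inv hz0
  have := (hG.comp z hinv).differentiableAt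
  refine this.congr_of_eventuallyEq ?_
  filter_upwards with w
  simp [flipFn, Function.comp, map_inv₀]

lemma unitary_entry (W : Matrix (Fin 2) (Fin 2) ℂ) (h : Wᴴ * W = 1) (i j : Fin 2) :
    W i j * (starRingEnd ℂ) W.det
      = (if i = j then 1 else -1) * (starRingEnd ℂ) (W (1 - i) (1 - j)) := by
  have hcomm : W * Wᴴ = 1 := mul_eq_one_comm.mp h
  have hadj : W.adjugate = W.det • Wᴴ := by
    calc W.adjugate = W.adjugate * (W * Wᴴ) := by rw [hcomm, mul_one]
    _ = (W.adjugate * W) * Wᴴ := by rw [mul_assoc]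
    _ = (W.det • 1) * Wᴴ := by rw [Matrix.adjugate_mul]
    _ = W.det • Wᴴ := by rw [Matrix.smul_mul, one_mul]
  have e : ∀ a b : Fin 2, W.adjugate a b = W.det * (starRingEnd ℂ) (W b a) := by
    intro a b
    rw [hadj]
    simp [Matrix.smul_apply, Matrix.conjTranspose_apply, smul_eq_mul]
  have e00 := e 0 0; have e01 := e 0 1; have e10 := e 1 0; have e11 := e 1 1
  simp only [Matrix.adjugate_fin_two, Matrix.cons_val', Matrix.cons_val_zero,
    Matrix.cons_val_one, Matrix.head_cons, Matrix.head_fin_const, Matrix.empty_val',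
    Matrix.cons_val_fin_one, Matrix.of_apply] at e00 e01 e10 e11
  have c00 := congrArg (starRingEnd ℂ) e00
  have c01 := congrArg (starRingEnd ℂ) e01
  have c10 := congrArg (starRingEnd ℂ) e10
  have c11 := congrArg (starRingEnd ℂ) e11
  simp only [_root_.map_mul, map_neg, Complex.conj_conj] at c00 c01 c10 c11
  fin_cases i <;> fin_cases j <;> norm_num
  · linear_combination -c00
  · linear_combination -c10
  · linear_combination -c01
  · linear_combination -c11


/-- every entry of a 2×2 matrix function with Schur entries, unitary a.e.
on the arc `γ` and with not-identically-zero determinant, admits a pseudocontinuation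
of bounded type across `γ`. -/
theorem statement3 (S : ℂ → Matrix (Fin 2) (Fin 2) ℂ) (γ : Set ℝ) (hγ : IsArc γ)
    (hS : ∀ i j, SchurFn fun z => S z i j)
    (hdet : ∃ z ∈ unitDisk, (S z).det ≠ 0)
    (huni : UnitaryAEOn S γ) :
    ∀ i j, PCArc (fun z => S z i j) γ := by
  intro i j
  have hdetDiff : DifferentiableOn ℂ (fun w => (S w).det) unitDisk := by
    have hrw : (fun w => (S w).det)
        = fun w => S w 0 0 * S w 1 1 - S w 0 1 * S w 1 0 := by
      funext w; rw [Matrix.det_fin_two]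
    rw [hrw]
    exact ((hS 0 0).1.mul (hS 1 1).1).sub ((hS 0 1).1.mul (hS 1 0).1)
  set i' : Fin 2 := 1 - i with hi'
  set j' : Fin 2 := 1 - j with hj'
  set ε : ℂ := if i = j then 1 else -1 with hε
  have hεnorm : ‖ε‖ = 1 := by by_cases h : i = j <;> simp [hε, h]
  set G : ℂ → ℂ := flipFn (fun w => S w i' j') with hGdef
  set H : ℂ → ℂ := flipFn (fun w => (S w).det) with hHdef
  set f₁ : ℂ → ℂ := fun z => ε * G z / 2 with hf₁
  set f₂ : ℂ → ℂ := fun z => H z / 2 with hf₂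
  refine ⟨fun z => f₁ z / f₂ z, ⟨f₁, f₂, ?_, ?_, ?_, ?_, ?_, fun z _ _ => rfl⟩, ?_⟩
  · exact ((diffOn_flip (hS i' j').1).const_mul ε).div_const 2
  · exact (diffOn_flip hdetDiff).div_const 2
  · intro z hz
    have h1 : ‖S ((starRingEnd ℂ z)⁻¹) i' j'‖ ≤ 1 :=
      (hS i' j').2 _ (mem_unitDisk_of_ext hz)
    have : ‖f₁ z‖ = ‖S ((starRingEnd ℂ z)⁻¹) i' j'‖ / 2 := by
      rw [hf₁]
      simp [hGdef, flipFn, norm_div, norm_mul, hεnorm, RCLike.norm_conj]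
    rw [this]; linarith
  · intro z hz
    have hmem := mem_unitDisk_of_ext hz
    have h1 : ‖(S ((starRingEnd ℂ z)⁻¹)).det‖ ≤ 2 := by
      rw [Matrix.det_fin_two]
      calc ‖S ((starRingEnd ℂ z)⁻¹) 0 0 * S ((starRingEnd ℂ z)⁻¹) 1 1
            - S ((starRingEnd ℂ z)⁻¹) 0 1 * S ((starRingEnd ℂ z)⁻¹) 1 0‖
          ≤ ‖S ((starRingEnd ℂ z)⁻¹) 0 0 * S ((starRingEnd ℂ z)⁻¹) 1 1‖
            + ‖S ((starRingEnd ℂ z)⁻¹) 0 1 * S ((starRingEnd ℂ z)⁻¹) 1 0‖ := norm_sub_le _ _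
        _ ≤ 1 * 1 + 1 * 1 := by
            rw [norm_mul, norm_mul]
            gcongr
            · exact (hS 0 0).2 _ hmem
            · exact (hS 1 1).2 _ hmem
            · exact (hS 0 1).2 _ hmem
            · exact (hS 1 0).2 _ hmem
        _ ≤ 2 := by norm_num
    have : ‖f₂ z‖ = ‖(S ((starRingEnd ℂ z)⁻¹)).det‖ / 2 := by
      rw [hf₂]
      simp [hHdef, flipFn, norm_div, RCLike.norm_conj]
    rw [this]; linarith
  · -- f₂ is not identically zero
    obtain ⟨z₀, hz₀, hd₀⟩ := hdet
    have hcont : ContinuousAt (fun w => (S w).det) z₀ :=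
      (hdetDiff.differentiableAt (isOpen_unitDisk.mem_nhds hz₀)).continuousAt
    have h1 : ∀ᶠ w in nhds z₀, (S w).det ≠ 0 ∧ w ∈ unitDisk :=
      (hcont.eventually_ne hd₀).and (isOpen_unitDisk.mem_nhds hz₀)
    have hdense : Dense ({(0:ℂ)}ᶜ : Set ℂ) := dense_compl_singleton 0
    have : (nhdsWithin z₀ ({(0:ℂ)}ᶜ : Set ℂ)).NeBot := mem_closure_iff_nhdsWithin_neBot.1 (hdense z₀)
    obtain ⟨z₁, ⟨hd₁, hz₁mem⟩, hz₁0⟩ :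
        ∃ w, ((S w).det ≠ 0 ∧ w ∈ unitDisk) ∧ w ≠ (0:ℂ) := by
      have h2 := (h1.filter_mono nhdsWithin_le_nhds).and
        (eventually_mem_nhdsWithin (a := z₀) (s := ({(0:ℂ)}ᶜ : Set ℂ)))
      exact h2.exists
    refine ⟨((starRingEnd ℂ) z₁)⁻¹, ?_, ?_⟩
    · have hpos : (0:ℝ) < ‖z₁‖ := norm_pos_iff.mpr hz₁0
      have hlt : ‖z₁‖ < 1 := hz₁mem
      have : ‖((starRingEnd ℂ) z₁)⁻¹‖ = ‖z₁‖⁻¹ := by rw [norm_inv, RCLike.norm_conj]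
      show (1:ℝ) < ‖((starRingEnd ℂ) z₁)⁻¹‖
      rw [this]
      exact (one_lt_inv₀ hpos).mpr hlt
    · rw [hf₂]
      simp only [hHdef, flipFn, map_inv₀, Complex.conj_conj, inv_inv]
      intro hcontra
      rw [div_eq_zero_iff] at hcontra
      rcases hcontra with hcontra | hcontra
      · exact hd₁ (by simpa using hcontra)
      · norm_num at hcontra
  · -- boundary matching
    filter_upwards [huni] with θ hθ
    obtain ⟨W, hWlim, hu⟩ := hθ
    refine ⟨W i j, hWlim i j, ?_⟩
    have hdet1 : (starRingEnd ℂ) W.det * W.det = 1 := by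
      have h := congrArg Matrix.det hu
      rwa [Matrix.det_mul, Matrix.det_conjTranspose, Matrix.det_one] at h
    have hdne : (starRingEnd ℂ) W.det ≠ 0 := left_ne_zero_of_mul_eq_one hdet1
    have key := unitary_entry W hu i j
    have E : ∀ a b, Filter.Tendsto (fun r : ℝ => S (((r⁻¹ : ℝ) : ℂ) * circlePt θ) a b)
        (nhdsWithin 1 (Set.Ioi 1)) (nhds (W a b)) := fun a b =>
      (hWlim a b).comp tendsto_inv_aux
    have hnum : Filter.Tendsto
        (fun r : ℝ => ε * (starRingEnd ℂ) (S (((r⁻¹:ℝ):ℂ) * circlePt θ) i' j') / 2)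
        (nhdsWithin 1 (Set.Ioi 1)) (nhds (ε * (starRingEnd ℂ) (W i' j') / 2)) :=
      (((Complex.continuous_conj.tendsto _).comp (E i' j')).const_mul ε).div_const 2
    have hden : Filter.Tendsto
        (fun r : ℝ => (starRingEnd ℂ) ((S (((r⁻¹:ℝ):ℂ) * circlePt θ)).det) / 2)
        (nhdsWithin 1 (Set.Ioi 1)) (nhds ((starRingEnd ℂ) W.det / 2)) := by
      have h1 : Filter.Tendsto (fun r : ℝ => (S (((r⁻¹:ℝ):ℂ) * circlePt θ)).det)
          (nhdsWithin 1 (Set.Ioi 1)) (nhds W.det) := by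
        simp only [Matrix.det_fin_two]
        exact ((E 0 0).mul (E 1 1)).sub ((E 0 1).mul (E 1 0))
      exact ((Complex.continuous_conj.tendsto _).comp h1).div_const 2
    have hne2 : (starRingEnd ℂ) W.det / 2 ≠ 0 := by
      simp [hdne]
    have hlim := hnum.div hden hne2
    have hval : (ε * (starRingEnd ℂ) (W i' j') / 2) / ((starRingEnd ℂ) W.det / 2)
        = W i j := by
      rw [div_div_div_cancel_right₀]
      rw [div_eq_iff hdne]
      simp only [← hε, ← hi', ← hj'] at key
      linear_combination -key
      exact two_ne_zero
    have hfun : ∀ r : ℝ,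
        (ε * (starRingEnd ℂ) (S (((r⁻¹:ℝ):ℂ) * circlePt θ) i' j') / 2)
          / ((starRingEnd ℂ) ((S (((r⁻¹:ℝ):ℂ) * circlePt θ)).det) / 2)
        = f₁ ((r:ℂ) * circlePt θ) / f₂ ((r:ℂ) * circlePt θ) := by
      intro r
      rw [hf₁, hf₂]
      simp only [hGdef, hHdef, flipFn, key_inv]
    show Filter.Tendsto (fun r : ℝ => f₁ ((r:ℂ) * circlePt θ) / f₂ ((r:ℂ) * circlePt θ))
        (nhdsWithin 1 (Set.Ioi 1)) (nhds (W i j))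
    rw [← hval]
    exact hlim.congr hfun
end
end

section
/- Let 0 < ε < 1/3 and let s, r, s₁₁, s₁₂, s₂₁ be complex numbers with |s| ≤ 1, |s₁₁| ≤ 1, |s₂₁| ≤ 1, |r·s₁₂|² = ε²(1 − |s|²), |r|² ≤ ε²(1−|s|²) ≤ ε², and |s₁₁|² + |s₂₁|² ≤ 1, |s₂₁·conj(s) + |r|²·s₁₁·conj(s₁₂)| ≤ 2. Then the 2×2 matrix V with rows (r²s₁₁, r·s₁₂) and (r·s₂₁, s) satisfies I − V*V ≥ 0 (positive semidefinite). -/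
open MeasureTheory Filter Complex Set Matrix
open scoped ComplexOrder

noncomputable section

/-- 2×2 criterion: a Hermitian matrix with nonnegative real diagonal entries and
nonnegative determinant is positive semidefinite. -/
lemma aux2 (a d : ℝ) (b : ℂ) (ha : 0 ≤ a) (hd : 0 ≤ d) (hb : ‖b‖ ^ 2 ≤ a * d) :
    (!![(a : ℂ), b; (starRingEnd ℂ) b, (d : ℂ)]).PosSemidef := by
  rw [Matrix.posSemidef_iff_dotProduct_mulVec]
  constructor
  · ext i j
    fin_cases i <;> fin_cases j <;>
      simp [Matrix.conjTranspose_apply, Complex.conj_ofReal]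
  · intro x
    have hx : star x ⬝ᵥ (!![(a : ℂ), b; (starRingEnd ℂ) b, (d : ℂ)]) *ᵥ x =
        ((a * Complex.normSq (x 0) + d * Complex.normSq (x 1)
          + 2 * ((starRingEnd ℂ) (x 0) * b * x 1).re : ℝ) : ℂ) := by
      simp [dotProduct, Matrix.mulVec, Fin.sum_univ_two, Complex.ext_iff,
        Complex.normSq_apply]
      constructor <;> ring
    rw [hx]
    rw [Complex.zero_le_real]
    set R := ((starRingEnd ℂ) (x 0) * b * x 1).re with hR
    set u := a * Complex.normSq (x 0) with hu
    set v := d * Complex.normSq (x 1) with hv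
    have hu0 : 0 ≤ u := mul_nonneg ha (Complex.normSq_nonneg _)
    have hv0 : 0 ≤ v := mul_nonneg hd (Complex.normSq_nonneg _)
    have h1 : R ^ 2 ≤ u * v := by
      have hra : R ^ 2 ≤ ‖(starRingEnd ℂ) (x 0) * b * x 1‖ ^ 2 := by
        rw [← _root_.sq_abs R]
        have := Complex.abs_re_le_norm ((starRingEnd ℂ) (x 0) * b * x 1)
        exact pow_le_pow_left₀ (abs_nonneg _) this 2
      have h2 : ‖(starRingEnd ℂ) (x 0) * b * x 1‖ ^ 2
          = Complex.normSq (x 0) * ‖b‖ ^ 2 * Complex.normSq (x 1) := by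
        simp [norm_mul, Complex.normSq_eq_norm_sq]
        ring
      rw [h2] at hra
      calc R ^ 2 ≤ Complex.normSq (x 0) * ‖b‖ ^ 2 * Complex.normSq (x 1) := hra
        _ ≤ Complex.normSq (x 0) * (a * d) * Complex.normSq (x 1) := by
            have h0 := Complex.normSq_nonneg (x 0)
            have h1 := Complex.normSq_nonneg (x 1)
            gcongr
        _ = u * v := by rw [hu, hv]; ring
    have key : 2 * |R| ≤ u + v := by
      nlinarith [sq_nonneg (u - v), _root_.sq_abs R, abs_nonneg R]
    have := neg_abs_le R
    linarith

/-- the pointwise contractivity estimate on `γ' = 𝕋 \ γ` used in the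
proof of Theorem 2. -/
theorem statement15 (ε : ℝ) (hε : 0 < ε) (hε' : ε < 1 / 3)
    (s r s₁₁ s₁₂ s₂₁ : ℂ)
    (hs : ‖s‖ ≤ 1) (h11 : ‖s₁₁‖ ≤ 1) (h21 : ‖s₂₁‖ ≤ 1)
    (hr12 : ‖r * s₁₂‖ ^ 2 = ε ^ 2 * (1 - ‖s‖ ^ 2))
    (hr : ‖r‖ ^ 2 ≤ ε ^ 2 * (1 - ‖s‖ ^ 2))
    (hr2 : ε ^ 2 * (1 - ‖s‖ ^ 2) ≤ ε ^ 2)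
    (hcol : ‖s₁₁‖ ^ 2 + ‖s₂₁‖ ^ 2 ≤ 1)
    (hv : ‖s₂₁ * (starRingEnd ℂ) s + ((‖r‖ ^ 2 : ℝ) : ℂ) * s₁₁ * (starRingEnd ℂ) s₁₂‖ ≤ 2) :
    ((1 : Matrix (Fin 2) (Fin 2) ℂ) -
      (!![r ^ 2 * s₁₁, r * s₁₂; r * s₂₁, s])ᴴ *
        !![r ^ 2 * s₁₁, r * s₁₂; r * s₂₁, s]).PosSemidef := by
  have nrm : ∀ z : ℂ, ‖z‖ ^ 2 = Complex.normSq z := fun z => by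
    rw [Complex.sq_norm]
  set a : ℝ := 1 - Complex.normSq r ^ 2 * Complex.normSq s₁₁
      - Complex.normSq r * Complex.normSq s₂₁ with ha_def
  set d : ℝ := 1 - Complex.normSq r * Complex.normSq s₁₂ - Complex.normSq s with hd_def
  set b : ℂ := -((starRingEnd ℂ) (r ^ 2 * s₁₁) * (r * s₁₂) + (starRingEnd ℂ) (r * s₂₁) * s)
    with hb_def
  have hW : (1 : Matrix (Fin 2) (Fin 2) ℂ) -
      (!![r ^ 2 * s₁₁, r * s₁₂; r * s₂₁, s])ᴴ *
        !![r ^ 2 * s₁₁, r * s₁₂; r * s₂₁, s] =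
      !![(a : ℂ), b; (starRingEnd ℂ) b, (d : ℂ)] := by
    ext i j
    fin_cases i <;> fin_cases j <;>
      · simp [Matrix.mul_apply, Fin.sum_univ_two, Matrix.conjTranspose_apply,
          Matrix.one_apply, ha_def, hd_def, hb_def, Complex.ofReal_sub, Complex.ofReal_mul,
          Complex.ofReal_pow, ← Complex.mul_conj]
        try ring
  rw [hW]
  -- basic real facts
  have hs2 : ‖s‖ ^ 2 ≤ 1 := by nlinarith [norm_nonneg s]
  have hε2 : ε ^ 2 < 1 / 9 := by nlinarith
  have hr1 : ‖r‖ ^ 2 ≤ ε ^ 2 := le_trans hr hr2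
  have hr0 : (0:ℝ) ≤ ‖r‖ ^ 2 := sq_nonneg _
  have h1s : (0:ℝ) ≤ 1 - ‖s‖ ^ 2 := by linarith
  have had : (8:ℝ)/9 ≤ a := by
    rw [ha_def, ← nrm, ← nrm, ← nrm]
    nlinarith [mul_nonneg (mul_nonneg (by nlinarith : (0:ℝ) ≤ 1 - ‖r‖^2) hr0)
      (sq_nonneg ‖s₁₁‖), sq_nonneg ‖s₂₁‖, sq_nonneg ‖s₁₁‖,
      mul_le_mul_of_nonneg_left hcol hr0]
  have hdd : d = (1 - ε ^ 2) * (1 - ‖s‖ ^ 2) := by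
    rw [hd_def, ← nrm, ← nrm, ← nrm]
    have h12 : ‖r‖ ^ 2 * ‖s₁₂‖ ^ 2 = ε ^ 2 * (1 - ‖s‖ ^ 2) := by
      rw [← hr12, norm_mul]; ring
    linear_combination -h12
  clear_value a d b
  apply aux2
  · linarith
  · rw [hdd]; nlinarith
  · -- ‖b‖ ^ 2 ≤ a * d
    have hrr : ((‖r‖ ^ 2 : ℝ) : ℂ) = r * (starRingEnd ℂ) r := by
      rw [nrm r]; exact (Complex.mul_conj r).symm
    have hfact : b = -((starRingEnd ℂ) r *
        ((starRingEnd ℂ) (s₂₁ * (starRingEnd ℂ) s + ((‖r‖ ^ 2 : ℝ) : ℂ) * s₁₁ *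
          (starRingEnd ℂ) s₁₂))) := by
      rw [hb_def]
      simp only [map_add, _root_.map_mul, Complex.conj_conj, map_pow, hrr]
      ring
    have hbound : ‖b‖ ≤ 2 * ‖r‖ := by
      rw [hfact, norm_neg, norm_mul, RCLike.norm_conj, RCLike.norm_conj]
      calc ‖r‖ * ‖s₂₁ * (starRingEnd ℂ) s + ((‖r‖ ^ 2 : ℝ) : ℂ) * s₁₁ * (starRingEnd ℂ) s₁₂‖
          ≤ ‖r‖ * 2 := by gcongr
        _ = 2 * ‖r‖ := by ring
    have hb2 : ‖b‖ ^ 2 ≤ 4 * (ε ^ 2 * (1 - ‖s‖ ^ 2)) := by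
      have h4 : ‖b‖ ^ 2 ≤ (2 * ‖r‖) ^ 2 := pow_le_pow_left₀ (norm_nonneg b) hbound 2
      have h5 : (2 * ‖r‖) ^ 2 = 4 * ‖r‖ ^ 2 := by ring
      linarith
    have key : 4 * ε ^ 2 ≤ a * (1 - ε ^ 2) := by
      have := mul_le_mul had (by linarith : (8:ℝ)/9 ≤ 1 - ε ^ 2) (by norm_num)
        (by linarith : (0:ℝ) ≤ a)
      linarith
    rw [hdd]
    calc ‖b‖ ^ 2 ≤ 4 * (ε ^ 2 * (1 - ‖s‖ ^ 2)) := hb2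
      _ = 4 * ε ^ 2 * (1 - ‖s‖ ^ 2) := by ring
      _ ≤ a * (1 - ε ^ 2) * (1 - ‖s‖ ^ 2) := mul_le_mul_of_nonneg_right key h1s
      _ = a * ((1 - ε ^ 2) * (1 - ‖s‖ ^ 2)) := by ring
end
end
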